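/- Let 𝒳, 𝒴 be finite alphabets with |𝒳| ≥ 2 and |𝒴| ≥ 1, W a discrete memoryless channel from 𝒳 to 𝒴, α ∈ (0, 1/2], and n a positive multiple of |𝒳| with n ≥ |𝒳| and n ≥ 2|𝒴|. In the sampling model in which each input symbol is fed n/|𝒳| times into the channel and Ĉⁿ(W) := C(Ŵ) is the capacity of the empirical channel, setting ε := (5/4)·√(N_α)·log(n·θ_α)/√n + N_α/n, it holds that Pr[ |Ĉⁿ(W) − C(W)| ≤ ε ] ≥ 1 − α. -/

import Mathlib

open MeasureTheory ProbabilityTheory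

/-- A probability distribution on a finite alphabet. -/
def IsDist {𝒴 : Type*} [Fintype 𝒴] (P : 𝒴 → ℝ) : Prop :=
  (∀ y, 0 ≤ P y) ∧ ∑ y, P y = 1

/-- The Kullback–Leibler divergence, valued in `EReal`: it equals the real sum
`∑ y, P y * log (P y / Q y)` (with the convention `0 · log (0/q) = 0`) when
`P ≪ Q`, and `+∞` if `P y > 0 = Q y` for some `y`. -/
noncomputable def klE {𝒴 : Type*} [Fintype 𝒴] (P Q : 𝒴 → ℝ) : EReal :=
  if ∀ y, Q y = 0 → P y = 0 then ((∑ y, P y * Real.log (P y / Q y) : ℝ) : EReal) else ⊤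

/-- The capacity of a DMC in the Csiszár–Kemperman dual (minimax) form. -/
noncomputable def capE {𝒳 𝒴 : Type*} [Fintype 𝒳] [Fintype 𝒴] (W : 𝒳 → 𝒴 → ℝ) : EReal :=
  ⨅ (Q : 𝒴 → ℝ) (_ : IsDist Q), ⨆ x : 𝒳, klE (W x) Q

/-- Real-valued capacity (the capacity of a DMC is always finite). -/
noncomputable def capR {𝒳 𝒴 : Type*} [Fintype 𝒳] [Fintype 𝒴] (W : 𝒳 → 𝒴 → ℝ) : ℝ :=
  (capE W).toReal

/-- Empirical channel from `m` output samples per input symbol: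
`Ŵ(y|x) = |{i : Y_{x,i} = y}| / m = (|𝒳|/n)·|{i : Y_{x,i} = y}|` with `n = |𝒳|·m`. -/
noncomputable def empCh {𝒳 𝒴 : Type*} [Fintype 𝒴] [DecidableEq 𝒴] {m : ℕ}
    (Ys : 𝒳 → Fin m → 𝒴) : 𝒳 → 𝒴 → ℝ :=
  fun x y => ((Finset.univ.filter fun i => Ys x i = y).card : ℝ) / m

/-- `N_α := 4|𝒳||𝒴| log(|𝒳|/α)`. -/
noncomputable def Nal (cX cY : ℕ) (α : ℝ) : ℝ := 4 * cX * cY * Real.log (cX / α)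

/-- `θ_α := (|𝒴|·e² / (|𝒳|·log(|𝒳|/α)))^{1/5}`. -/
noncomputable def thetaAl (cX cY : ℕ) (α : ℝ) : ℝ :=
  ((cY : ℝ) * Real.exp 2 / (cX * Real.log (cX / α))) ^ ((1 : ℝ) / 5)

set_option linter.unusedSectionVars false
set_option linter.unusedVariables false
set_option linter.deprecated false
set_option maxHeartbeats 1000000

section PartHoeffding
open Real
lemma bernoulli_mgf_le {p t : ℝ} (hp0 : 0 ≤ p) (hp1 : p ≤ 1) (ht : 0 ≤ t) :
    1 - p + p * exp t ≤ exp (p * t + t ^ 2 / 8) := by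
  set f : ℝ → ℝ := fun s => 1 - p + p * exp s with hf
  have hfpos : ∀ s, 0 < f s := by
    intro s
    rcases lt_or_ge p 1 with h | h
    · have : 0 < 1 - p := by linarith
      have : 0 ≤ p * exp s := mul_nonneg hp0 (exp_pos s).le
      simp only [hf]; linarith
    · have hp : p = 1 := le_antisymm hp1 h
      simp [hf, hp]; positivity
  set G : ℝ → ℝ := fun s => p + s / 4 - p * exp s / f s with hG
  set F : ℝ → ℝ := fun s => p * s + s ^ 2 / 8 - Real.log (f s) with hF
  have hfd : ∀ s, HasDerivAt f (p * exp s) s := by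
    intro s
    exact ((Real.hasDerivAt_exp s).const_mul p).const_add (1 - p)
  have hGd : ∀ s, HasDerivAt G (1 / 4 - p * exp s * (1 - p) / (f s) ^ 2) s := by
    intro s
    have hnum : HasDerivAt (fun s => p * exp s) (p * exp s) s := by
      simpa using (Real.hasDerivAt_exp s).const_mul p
    have hdiv : HasDerivAt (fun s => p * exp s / f s)
        ((p * exp s * f s - p * exp s * (p * exp s)) / (f s) ^ 2) s :=
      hnum.div (hfd s) (hfpos s).ne'
    have h1 : HasDerivAt (fun s => p + s / 4) (1 / 4) s := by
      simpa using ((hasDerivAt_id s).div_const 4).const_add p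
    have := h1.sub hdiv
    have e : p * exp s * f s - p * exp s * (p * exp s) = p * exp s * (1 - p) := by
      simp only [hf]; ring
    rw [e] at this
    exact this
  have hGderiv_nonneg : ∀ s, 0 ≤ 1 / 4 - p * exp s * (1 - p) / (f s) ^ 2 := by
    intro s
    have h2 : p * exp s * (1 - p) ≤ (f s) ^ 2 / 4 := by
      have : (f s) ^ 2 = (p * exp s + (1 - p)) ^ 2 := by simp only [hf]; ring_nf
      rw [this]
      nlinarith [sq_nonneg (p * exp s - (1 - p))]
    have hsq : 0 < (f s) ^ 2 := pow_pos (hfpos s) 2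
    rw [le_sub_iff_add_le, zero_add, div_le_iff₀ hsq]
    nlinarith
  have hGmono : Monotone G := by
    apply monotone_of_deriv_nonneg
    · exact fun s => (hGd s).differentiableAt
    · intro s
      rw [(hGd s).deriv]
      exact hGderiv_nonneg s
  have hG0 : G 0 = 0 := by simp [hG, hf]
  have hFd : ∀ s, HasDerivAt F (G s) s := by
    intro s
    have hlog : HasDerivAt (fun s => Real.log (f s)) (p * exp s / f s) s :=
      (hfd s).log (hfpos s).ne'
    have h1 : HasDerivAt (fun s => p * s + s ^ 2 / 8) (p + s / 4) s := by
      have := ((hasDerivAt_pow 2 s).div_const 8).const_add (p * s)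
      have h2 : HasDerivAt (fun u => p * u) p s := by simpa using (hasDerivAt_id s).const_mul p
      have := h2.add ((hasDerivAt_pow 2 s).div_const 8)
      exact this.congr_deriv (by norm_num; ring)
    exact h1.sub hlog
  have hFmono : MonotoneOn F (Set.Ici 0) := by
    apply monotoneOn_of_deriv_nonneg (convex_Ici 0)
    · exact Continuous.continuousOn (by
        have : Continuous f := by fun_prop
        fun_prop (disch := exact fun s => (hfpos s).ne'))
    · intro s _
      exact (hFd s).differentiableAt.differentiableWithinAt
    · intro s hs
      rw [(hFd s).deriv]
      rw [interior_Ici, Set.mem_Ioi] at hs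
      calc (0:ℝ) = G 0 := hG0.symm
      _ ≤ G s := hGmono (le_of_lt hs)
  have hF0 : F 0 = 0 := by simp [hF, hf]
  have hFt : 0 ≤ F t := by
    calc (0:ℝ) = F 0 := hF0.symm
    _ ≤ F t := hFmono (Set.mem_Ici.mpr le_rfl) (Set.mem_Ici.mpr ht) ht
  have : Real.log (f t) ≤ p * t + t ^ 2 / 8 := by simp only [hF] at hFt; linarith
  calc f t = exp (Real.log (f t)) := (Real.exp_log (hfpos t)).symm
  _ ≤ exp (p * t + t ^ 2 / 8) := exp_le_exp.mpr this

end PartHoeffding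

section Part1
variable {𝒳 𝒴 : Type*} [Fintype 𝒳] [Nonempty 𝒳] [Fintype 𝒴] [Nonempty 𝒴]

lemma IsDist.le_one {P : 𝒴 → ℝ} (hP : IsDist P) (y : 𝒴) : P y ≤ 1 := by
  rw [← hP.2]
  exact Finset.single_le_sum (fun i _ => hP.1 i) (Finset.mem_univ y)

lemma klE_nonneg {P Q : 𝒴 → ℝ} (hP : IsDist P) (hQ : IsDist Q) : (0:EReal) ≤ klE P Q := by
  unfold klE
  split_ifs with hac
  · have key : (0:ℝ) ≤ ∑ y, P y * Real.log (P y / Q y) := by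
      have h1 : ∀ y : 𝒴, P y - Q y ≤ P y * Real.log (P y / Q y) := by
        intro y
        rcases eq_or_lt_of_le (hP.1 y) with h0 | hpos
        · simp [← h0]
          exact hQ.1 y
        · have hq : 0 < Q y := by
            rcases eq_or_lt_of_le (hQ.1 y) with h0' | h; · exact absurd (hac y h0'.symm) (by positivity)
            · exact h
          have : Real.log (Q y / P y) ≤ Q y / P y - 1 :=
            Real.log_le_sub_one_of_pos (by positivity)
          have hlog : 1 - Q y / P y ≤ Real.log (P y / Q y) := by
            have e1 : Real.log (Q y / P y) = Real.log (Q y) - Real.log (P y) :=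
              Real.log_div (ne_of_gt hq) (ne_of_gt hpos)
            have e2 : Real.log (P y / Q y) = Real.log (P y) - Real.log (Q y) :=
              Real.log_div (ne_of_gt hpos) (ne_of_gt hq)
            rw [e1] at this
            rw [e2]
            linarith
          calc P y - Q y = P y * (1 - Q y / P y) := by field_simp
          _ ≤ P y * Real.log (P y / Q y) := by
            apply mul_le_mul_of_nonneg_left hlog hpos.le
      calc (0:ℝ) = ∑ y, (P y - Q y) := by rw [Finset.sum_sub_distrib, hP.2, hQ.2]; ring
      _ ≤ _ := Finset.sum_le_sum fun y _ => h1 y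
    exact_mod_cast EReal.coe_nonneg.mpr key
  · exact le_top

lemma klE_uniform_le {P : 𝒴 → ℝ} (hP : IsDist P) :
    klE P (fun _ => (Fintype.card 𝒴 : ℝ)⁻¹) ≤ ((Real.log (Fintype.card 𝒴) : ℝ) : EReal) := by
  have hY : (0:ℝ) < Fintype.card 𝒴 := by positivity
  unfold klE
  rw [if_pos (by intro y h; exact absurd h (by positivity))]
  have key : (∑ y, P y * Real.log (P y / (Fintype.card 𝒴 : ℝ)⁻¹)) ≤ Real.log (Fintype.card 𝒴) := by
    have h1 : ∀ y : 𝒴, P y * Real.log (P y / (Fintype.card 𝒴 : ℝ)⁻¹)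
        ≤ P y * Real.log (Fintype.card 𝒴) := by
      intro y
      rcases eq_or_lt_of_le (hP.1 y) with h0 | hpos
      · simp [← h0]
      · rw [div_inv_eq_mul, Real.log_mul (ne_of_gt hpos) (ne_of_gt hY)]
        have : Real.log (P y) ≤ 0 := Real.log_nonpos (hP.1 y) (hP.le_one y)
        nlinarith
    calc _ ≤ ∑ y, P y * Real.log (Fintype.card 𝒴) := Finset.sum_le_sum fun y _ => h1 y
    _ = Real.log (Fintype.card 𝒴) := by rw [← Finset.sum_mul, hP.2, one_mul]
  exact_mod_cast key

lemma isDist_uniform : IsDist (fun _ : 𝒴 => (Fintype.card 𝒴 : ℝ)⁻¹) := by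
  constructor
  · intro y; positivity
  · rw [Finset.sum_const, Finset.card_univ, nsmul_eq_mul]
    have hY : (0:ℝ) < Fintype.card 𝒴 := by positivity
    field_simp

lemma capE_nonneg {W : 𝒳 → 𝒴 → ℝ} (hW : ∀ x, IsDist (W x)) : (0:EReal) ≤ capE W := by
  refine le_iInf fun Q => le_iInf fun hQ => ?_
  obtain ⟨x⟩ := ‹Nonempty 𝒳›
  exact le_trans (klE_nonneg (hW x) hQ) (le_iSup (fun x => klE (W x) Q) x)

lemma capE_le_logY {W : 𝒳 → 𝒴 → ℝ} (hW : ∀ x, IsDist (W x)) :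
    capE W ≤ ((Real.log (Fintype.card 𝒴) : ℝ) : EReal) := by
  refine le_trans (iInf₂_le _ isDist_uniform) ?_
  exact iSup_le fun x => klE_uniform_le (hW x)

lemma capR_nonneg {W : 𝒳 → 𝒴 → ℝ} (hW : ∀ x, IsDist (W x)) : 0 ≤ capR W := by
  have h := EReal.toReal_le_toReal (capE_nonneg hW)
    (by simp) (ne_top_of_le_ne_top (by simp) (capE_le_logY hW))
  simpa [capR] using h

lemma capE_coe_capR {W : 𝒳 → 𝒴 → ℝ} (hW : ∀ x, IsDist (W x)) :
    capE W = ((capR W : ℝ) : EReal) := by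
  rw [capR, EReal.coe_toReal]
  · exact ne_top_of_le_ne_top (by simp) (capE_le_logY hW)
  · exact ne_bot_of_le_ne_bot (by simp) (capE_nonneg hW)

lemma capR_le_logY {W : 𝒳 → 𝒴 → ℝ} (hW : ∀ x, IsDist (W x)) :
    capR W ≤ Real.log (Fintype.card 𝒴) := by
  have := capE_le_logY hW
  rw [capE_coe_capR hW] at this
  exact_mod_cast this

end Part1

section Part3
open Real
variable {𝒳 𝒴 : Type*} [Fintype 𝒳] [Nonempty 𝒳] [Fintype 𝒴] [Nonempty 𝒴]

lemma negMulLog_mono {s t : ℝ} (hs : 0 ≤ s) (hst : s ≤ t) (ht : t ≤ exp (-1)) :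
    negMulLog s ≤ negMulLog t := by
  rcases eq_or_lt_of_le hs with h0 | hs0
  · rw [← h0, negMulLog_zero]
    exact negMulLog_nonneg (le_trans hs hst) (le_trans ht (by
      rw [← Real.exp_zero]; exact exp_le_exp.mpr (by norm_num)))
  · have ht0 : 0 < t := lt_of_lt_of_le hs0 hst
    have hlogt : -Real.log t ≥ 1 := by
      have := Real.log_le_log ht0 ht
      rw [Real.log_exp] at this; linarith
    set r := s / t with hr
    have hr0 : 0 < r := div_pos hs0 ht0
    have hr1 : r ≤ 1 := (div_le_one ht0).mpr hst
    have hkey : r * (-Real.log r) ≤ (1 - r) * (-Real.log t) := by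
      have h1 : -Real.log r ≤ 1/r - 1 := by
        have := Real.log_le_sub_one_of_pos (show (0:ℝ) < 1/r by positivity)
        rw [Real.log_div one_ne_zero hr0.ne', Real.log_one] at this
        linarith
      have h2 : r * (-Real.log r) ≤ r * (1/r - 1) := by
        apply mul_le_mul_of_nonneg_left h1 hr0.le
      have h3 : r * (1/r - 1) = 1 - r := by field_simp
      have h4 : (1 - r) * 1 ≤ (1 - r) * (-Real.log t) :=
        mul_le_mul_of_nonneg_left hlogt (by linarith)
      linarith
    have hst' : s = r * t := by rw [hr]; field_simp
    have e : negMulLog s = t * (r * (-Real.log r)) + r * (t * (-Real.log t)) := by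
      rw [negMulLog, hst', Real.log_mul hr0.ne' ht0.ne']; ring
    have h2 : t * (r * (-Real.log r)) ≤ t * ((1 - r) * (-Real.log t)) :=
      mul_le_mul_of_nonneg_left hkey ht0.le
    have h3 : t * ((1 - r) * (-Real.log t)) + r * (t * (-Real.log t)) = negMulLog t := by
      rw [negMulLog]; ring
    linarith

lemma mulLog_diff_le {a b : ℝ} (ha0 : 0 ≤ a) (ha1 : a ≤ 1) (hb0 : 0 ≤ b) (hb1 : b ≤ 1) :
    a * Real.log a - b * Real.log b ≤ |a - b| + negMulLog |a - b| := by
  have habs0 : 0 ≤ |a - b| := abs_nonneg _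
  have habs1 : |a - b| ≤ 1 := abs_le.mpr ⟨by linarith, by linarith⟩
  have hneg : 0 ≤ negMulLog |a - b| := negMulLog_nonneg habs0 habs1
  rcases le_total a b with h | h
  · -- a ≤ b : a log a - b log b ≤ negMulLog (b - a) by superadditivity
    have hd : |a - b| = b - a := by rw [abs_sub_comm]; exact abs_of_nonneg (by linarith)
    have hsuper : b * Real.log b ≥ a * Real.log a + (b - a) * Real.log (b - a) := by
      rcases eq_or_lt_of_le ha0 with h0 | ha0'
      · simp [← h0]
      · rcases eq_or_lt_of_le h with he | hlt
        · rw [he]; simp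
        · have hba : 0 < b - a := by linarith
          have hb' : 0 < b := by linarith
          have l1 : a * Real.log a ≤ a * Real.log b :=
            mul_le_mul_of_nonneg_left (Real.log_le_log ha0' (by linarith)) ha0
          have l2 : (b - a) * Real.log (b - a) ≤ (b - a) * Real.log b :=
            mul_le_mul_of_nonneg_left (Real.log_le_log hba (by linarith)) hba.le
          nlinarith
    rw [hd]
    simp only [negMulLog]
    have hba : 0 ≤ b - a := by linarith
    linarith [hsuper]
  · -- b ≤ a : a log a - b log b ≤ a - b
    have hd : |a - b| = a - b := abs_of_nonneg (by linarith)
    have hmain : a * Real.log a - b * Real.log b ≤ a - b := by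
      rcases eq_or_lt_of_le hb0 with h0 | hb0'
      · -- b = 0
        simp [← h0]
        have : Real.log a ≤ 0 := Real.log_nonpos ha0 ha1
        nlinarith
      · have ha' : 0 < a := lt_of_lt_of_le hb0' h
        have l1 : Real.log a - Real.log b ≤ (a - b) / b := by
          have := Real.log_le_sub_one_of_pos (show 0 < a / b by positivity)
          rw [Real.log_div ha'.ne' hb0'.ne'] at this
          have : Real.log a - Real.log b ≤ a / b - 1 := this
          have he : a / b - 1 = (a - b) / b := by field_simp
          linarith [he ▸ this]
        have l2 : Real.log a ≤ 0 := Real.log_nonpos ha0 ha1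
        have expand : a * Real.log a - b * Real.log b
            = b * (Real.log a - Real.log b) + (a - b) * Real.log a := by ring
        have t1 : b * (Real.log a - Real.log b) ≤ a - b := by
          rw [div_eq_mul_inv] at l1
          calc b * (Real.log a - Real.log b) ≤ b * ((a - b) * b⁻¹) :=
            mul_le_mul_of_nonneg_left l1 hb0
          _ = a - b := by field_simp
        have t2 : (a - b) * Real.log a ≤ 0 := mul_nonpos_of_nonneg_of_nonpos (by linarith) l2
        linarith
    rw [hd] at hneg ⊢
    linarith

lemma jensen_negMulLog {d : 𝒴 → ℝ} (hd : ∀ y, 0 ≤ d y) :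
    ∑ y, negMulLog (d y) ≤ (Fintype.card 𝒴 : ℝ) * negMulLog ((∑ y, d y) / Fintype.card 𝒴) := by
  have hY : (0:ℝ) < Fintype.card 𝒴 := by positivity
  have hjj := Real.concaveOn_negMulLog.le_map_sum (t := Finset.univ)
    (w := fun _ : 𝒴 => (Fintype.card 𝒴 : ℝ)⁻¹) (p := d)
    (fun i _ => by positivity)
    (by rw [Finset.sum_const, Finset.card_univ, nsmul_eq_mul]; field_simp)
    (fun i _ => Set.mem_Ici.mpr (hd i))
  simp only [smul_eq_mul] at hjj
  have e1 : ∑ y, (Fintype.card 𝒴 : ℝ)⁻¹ * d y = (∑ y, d y) / Fintype.card 𝒴 := by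
    rw [← Finset.mul_sum]; ring
  rw [e1] at hjj
  have e2 : ∑ y, (Fintype.card 𝒴 : ℝ)⁻¹ * negMulLog (d y)
      = (Fintype.card 𝒴 : ℝ)⁻¹ * ∑ y, negMulLog (d y) := by rw [← Finset.mul_sum]
  rw [e2] at hjj
  calc ∑ y, negMulLog (d y) = (Fintype.card 𝒴 : ℝ) * ((Fintype.card 𝒴 : ℝ)⁻¹ * ∑ y, negMulLog (d y)) := by
        field_simp
  _ ≤ _ := mul_le_mul_of_nonneg_left hjj hY.le

lemma cap_continuity {W V : 𝒳 → 𝒴 → ℝ} (hW : ∀ x, IsDist (W x)) (hV : ∀ x, IsDist (V x))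
    (hY : 2 ≤ Fintype.card 𝒴) {Δ : ℝ} (hΔ0 : 0 < Δ) (hΔh : Δ ≤ 1/2)
    (hL1 : ∀ x, ∑ y, |V x y - W x y| ≤ Δ) :
    capR V ≤ capR W + (2 * Δ * Real.log (Fintype.card 𝒴 / Δ) + 3 * Δ) := by
  set Yc : ℝ := (Fintype.card 𝒴 : ℝ) with hYc
  have hYpos : (0:ℝ) < Yc := by positivity
  have hY2 : (2:ℝ) ≤ Yc := by rw [hYc]; exact_mod_cast hY
  set G : ℝ := 2 * Δ * Real.log (Yc / Δ) + 3 * Δ with hG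
  rw [add_comm (capR W) G]
  refine le_of_forall_pos_le_add fun η hη => ?_
  rw [add_comm, ← add_assoc]
  -- choose near-optimal Q for W
  have h1 : capE W < ((capR W + η : ℝ) : EReal) := by
    rw [capE_coe_capR hW]
    exact_mod_cast (by linarith : capR W < capR W + η)
  obtain ⟨Q, hQl⟩ := iInf_lt_iff.mp h1
  obtain ⟨hQ, hQl⟩ := iInf_lt_iff.mp hQl
  have hax : ∀ x, klE (W x) Q < ((capR W + η : ℝ) : EReal) :=
    fun x => lt_of_le_of_lt (le_iSup (fun x => klE (W x) Q) x) hQl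
  have hac : ∀ x y, Q y = 0 → W x y = 0 := by
    intro x
    have := hax x
    unfold klE at this
    split_ifs at this with h
    · exact h
    · exact absurd this (by simp)
  have hDW : ∀ x, (∑ y, W x y * Real.log (W x y / Q y)) < capR W + η := by
    intro x
    have := hax x
    unfold klE at this
    rw [if_pos (hac x)] at this
    exact_mod_cast this
  -- perturbed output distribution
  set Q' : 𝒴 → ℝ := fun y => (1 - Δ) * Q y + Δ / Yc with hQ'
  have hQ'pos : ∀ y, 0 < Q' y := by
    intro y
    have : 0 ≤ (1 - Δ) * Q y := mul_nonneg (by linarith) (hQ.1 y)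
    have : 0 < Δ / Yc := by positivity
    simp only [hQ']; linarith
  have hQ'dist : IsDist Q' := by
    constructor
    · exact fun y => (hQ'pos y).le
    · simp only [hQ']
      rw [Finset.sum_add_distrib, ← Finset.mul_sum, hQ.2, Finset.sum_const, Finset.card_univ,
        nsmul_eq_mul]
      field_simp
      rw [← hYc]; ring
  have hQ'le1 : ∀ y, Q' y ≤ 1 := by
    intro y
    have h1 : Q y ≤ 1 := hQ.le_one y
    have h2 : (1 - Δ) * Q y ≤ (1 - Δ) * 1 := mul_le_mul_of_nonneg_left h1 (by linarith)
    have h3 : Δ / Yc ≤ Δ := by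
      rw [div_le_iff₀ hYpos]; nlinarith
    simp only [hQ']; linarith
  have hlogYΔ : 0 ≤ Real.log (Yc / Δ) := Real.log_nonneg (by rw [le_div_iff₀ hΔ0]; nlinarith)
  have hlogQ'bound : ∀ y, -Real.log (Q' y) ≤ Real.log (Yc / Δ) ∧ 0 ≤ -Real.log (Q' y) := by
    intro y
    constructor
    · have h1 : Δ / Yc ≤ Q' y := by
        simp only [hQ']
        have : 0 ≤ (1 - Δ) * Q y := mul_nonneg (by linarith) (hQ.1 y)
        linarith
      have h2 : Real.log (Δ / Yc) ≤ Real.log (Q' y) := Real.log_le_log (by positivity) h1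
      have h3 : Real.log (Δ / Yc) = -Real.log (Yc / Δ) := by
        rw [Real.log_div hΔ0.ne' hYpos.ne', Real.log_div hYpos.ne' hΔ0.ne']; ring
      linarith
    · have := Real.log_nonpos (hQ'pos y).le (hQ'le1 y)
      linarith
  -- the key per-x inequality
  have hkey : ∀ x, (∑ y, V x y * Real.log (V x y / Q' y))
      ≤ (∑ y, W x y * Real.log (W x y / Q y)) + G := by
    intro x
    have hvy := (hV x).1
    have hwy := (hW x).1
    have hv1 : ∀ y, V x y ≤ 1 := fun y => (hV x).le_one y
    have hw1 : ∀ y, W x y ≤ 1 := fun y => (hW x).le_one y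
    -- split DV
    have eDV : (∑ y, V x y * Real.log (V x y / Q' y))
        = (∑ y, V x y * Real.log (V x y)) - ∑ y, V x y * Real.log (Q' y) := by
      rw [← Finset.sum_sub_distrib]
      refine Finset.sum_congr rfl fun y _ => ?_
      rcases eq_or_lt_of_le (hvy y) with h0 | hpos
      · simp [← h0]
      · rw [Real.log_div hpos.ne' (hQ'pos y).ne']; ring
    have eDW : (∑ y, W x y * Real.log (W x y / Q y))
        = (∑ y, W x y * Real.log (W x y)) - ∑ y, W x y * Real.log (Q y) := by
      rw [← Finset.sum_sub_distrib]
      refine Finset.sum_congr rfl fun y _ => ?_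
      rcases eq_or_lt_of_le (hwy y) with h0 | hpos
      · simp [← h0]
      · have hq : Q y ≠ 0 := fun h => hpos.ne' (hac x y h)
        rw [Real.log_div hpos.ne' hq]; ring
    -- i3 : ∑ w log Q ≤ ∑ w log Q' - log (1-Δ)
    have i3 : ∑ y, W x y * Real.log (Q y) ≤ (∑ y, W x y * Real.log (Q' y)) - Real.log (1 - Δ) := by
      have t1 : ∀ y, W x y * Real.log (Q y) + W x y * Real.log (1 - Δ)
          ≤ W x y * Real.log (Q' y) := by
        intro y
        rcases eq_or_lt_of_le (hwy y) with h0 | hpos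
        · simp [← h0]
        · have hq : 0 < Q y := by
            rcases eq_or_lt_of_le (hQ.1 y) with h0' | h; · exact absurd (hac x y h0'.symm) hpos.ne'
            · exact h
          have h1Δ : 0 < 1 - Δ := by linarith
          have hle : (1 - Δ) * Q y ≤ Q' y := by
            simp only [hQ']
            have : 0 < Δ / Yc := by positivity
            linarith
          have := Real.log_le_log (by positivity) hle
          rw [Real.log_mul h1Δ.ne' hq.ne'] at this
          have := mul_le_mul_of_nonneg_left this hpos.le
          linarith [this]
      have hsum : ∑ y, (W x y * Real.log (Q y) + W x y * Real.log (1 - Δ))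
          ≤ ∑ y, W x y * Real.log (Q' y) :=
        Finset.sum_le_sum fun y _ => t1 y
      rw [Finset.sum_add_distrib, ← Finset.sum_mul, (hW x).2, one_mul] at hsum
      linarith
    -- i4 : ∑ (w - v) log Q' ≤ Δ log(Y/Δ)
    have i4 : (∑ y, W x y * Real.log (Q' y)) - ∑ y, V x y * Real.log (Q' y)
        ≤ Δ * Real.log (Yc / Δ) := by
      have t1 : ∀ y, (W x y - V x y) * Real.log (Q' y) ≤ |V x y - W x y| * Real.log (Yc / Δ) := by
        intro y
        obtain ⟨hb1, hb2⟩ := hlogQ'bound y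
        calc (W x y - V x y) * Real.log (Q' y) = (V x y - W x y) * (-Real.log (Q' y)) := by ring
        _ ≤ |V x y - W x y| * (-Real.log (Q' y)) :=
            mul_le_mul_of_nonneg_right (le_abs_self _) hb2
        _ ≤ |V x y - W x y| * Real.log (Yc / Δ) :=
            mul_le_mul_of_nonneg_left hb1 (abs_nonneg _)
      calc (∑ y, W x y * Real.log (Q' y)) - ∑ y, V x y * Real.log (Q' y)
          = ∑ y, (W x y - V x y) * Real.log (Q' y) := by
            rw [← Finset.sum_sub_distrib]; exact Finset.sum_congr rfl fun y _ => by ring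
      _ ≤ ∑ y, |V x y - W x y| * Real.log (Yc / Δ) := Finset.sum_le_sum fun y _ => t1 y
      _ = (∑ y, |V x y - W x y|) * Real.log (Yc / Δ) := by rw [Finset.sum_mul]
      _ ≤ Δ * Real.log (Yc / Δ) := mul_le_mul_of_nonneg_right (hL1 x) hlogYΔ
    -- i5 : entropy difference
    have i5 : (∑ y, V x y * Real.log (V x y)) - ∑ y, W x y * Real.log (W x y)
        ≤ Δ * Real.log (Yc / Δ) + Δ := by
      have S := ∑ y, |V x y - W x y|
      have t1 : ∀ y, V x y * Real.log (V x y) - W x y * Real.log (W x y)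
          ≤ |V x y - W x y| + negMulLog |V x y - W x y| :=
        fun y => mulLog_diff_le (hvy y) (hv1 y) (hwy y) (hw1 y)
      have step1 : (∑ y, V x y * Real.log (V x y)) - ∑ y, W x y * Real.log (W x y)
          ≤ (∑ y, |V x y - W x y|) + ∑ y, negMulLog |V x y - W x y| := by
        rw [← Finset.sum_sub_distrib, ← Finset.sum_add_distrib]
        exact Finset.sum_le_sum fun y _ => t1 y
      have step2 : ∑ y, negMulLog |V x y - W x y|
          ≤ Yc * negMulLog ((∑ y, |V x y - W x y|) / Yc) :=
        jensen_negMulLog fun y => abs_nonneg _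
      have hS0 : 0 ≤ ∑ y, |V x y - W x y| := Finset.sum_nonneg fun y _ => abs_nonneg _
      have hΔY : Δ / Yc ≤ exp (-1) := by
        have hexp : (0.25:ℝ) ≤ exp (-1) := by
          rw [Real.exp_neg]
          rw [le_inv_comm₀ (by norm_num) (Real.exp_pos 1)]
          calc (0.25:ℝ)⁻¹ = 4 := by norm_num
          _ ≥ rexp 1 := by linarith [Real.exp_one_lt_d9]
        calc Δ / Yc ≤ (1/2) / 2 := div_le_div₀ (by norm_num) hΔh (by norm_num) hY2
        _ ≤ exp (-1) := by norm_num at hexp ⊢; linarith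
      have step3 : Yc * negMulLog ((∑ y, |V x y - W x y|) / Yc) ≤ Yc * negMulLog (Δ / Yc) := by
        apply mul_le_mul_of_nonneg_left _ hYpos.le
        exact negMulLog_mono (by positivity)
          (by gcongr; exact hL1 x) hΔY
      have step4 : Yc * negMulLog (Δ / Yc) = Δ * Real.log (Yc / Δ) := by
        rw [negMulLog, Real.log_div hΔ0.ne' hYpos.ne', Real.log_div hYpos.ne' hΔ0.ne']
        field_simp
        ring
      linarith [hL1 x]
    -- i6
    have i6 : -Real.log (1 - Δ) ≤ 2 * Δ := by
      have h1Δ : 0 < 1 - Δ := by linarith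
      have := Real.log_le_sub_one_of_pos (show (0:ℝ) < (1 - Δ)⁻¹ by positivity)
      rw [Real.log_inv] at this
      have h2 : (1 - Δ)⁻¹ - 1 = Δ / (1 - Δ) := by field_simp; ring
      have h3 : Δ / (1 - Δ) ≤ 2 * Δ := by
        rw [div_le_iff₀ h1Δ]; nlinarith
      linarith
    -- combine
    have hGe : G = 2 * Δ * Real.log (Yc / Δ) + 3 * Δ := hG
    linarith [eDV, eDW, i3, i4, i5, i6]
  -- wrap up through EReal
  suffices hfin : capR V ≤ capR W + η + G by linarith
  have hcapEV : capE V ≤ ((capR W + η + G : ℝ) : EReal) := by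
    refine le_trans (iInf₂_le Q' hQ'dist) (iSup_le fun x => ?_)
    unfold klE
    rw [if_pos (fun y h => absurd h (hQ'pos y).ne')]
    have h1 : (∑ y, V x y * Real.log (V x y / Q' y)) ≤ capR W + η + G := by
      have := hkey x
      have := hDW x
      linarith
    exact_mod_cast h1
  have h2 := EReal.toReal_le_toReal hcapEV
    (ne_bot_of_le_ne_bot (by simp) (capE_nonneg hV)) (EReal.coe_ne_top _)
  rwa [EReal.toReal_coe] at h2

end Part3

section Part6
open Finset
lemma count_fiber_sum {𝒴 : Type*} [Fintype 𝒴] [DecidableEq 𝒴] {m : ℕ} (f : Fin m → 𝒴) :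
    ∑ y, ((Finset.univ.filter fun i => f i = y).card : ℝ) = m := by
  have h := Finset.card_eq_sum_card_fiberwise
    (s := (Finset.univ : Finset (Fin m))) (t := (Finset.univ : Finset 𝒴)) (f := f)
    (fun i _ => Finset.mem_univ (f i))
  rw [Finset.card_univ, Fintype.card_fin] at h
  exact_mod_cast congrArg (Nat.cast : ℕ → ℝ) h.symm

lemma count_subset_sum {𝒴 : Type*} [Fintype 𝒴] [DecidableEq 𝒴] {m : ℕ} (f : Fin m → 𝒴)
    (S : Finset 𝒴) :
    (∑ i : Fin m, if f i ∈ S then (1:ℝ) else 0)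
      = ∑ y ∈ S, ((Finset.univ.filter fun i => f i = y).card : ℝ) := by
  rw [Finset.sum_boole]
  have h := Finset.card_eq_sum_card_fiberwise
    (s := Finset.univ.filter fun i => f i ∈ S) (t := S) (f := f)
    (fun i hi => (Finset.mem_filter.mp hi).2)
  rw [h]
  push_cast
  refine Finset.sum_congr rfl fun y hy => ?_
  rw [Finset.filter_filter]
  have hset : (Finset.univ.filter fun a => f a ∈ S ∧ f a = y)
      = Finset.univ.filter fun i => f i = y := by
    ext i
    simp only [Finset.mem_filter, Finset.mem_univ, true_and]
    constructor
    · rintro ⟨_, h2⟩; exact h2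
    · intro h2; exact ⟨h2 ▸ hy, h2⟩
  rw [hset]

lemma l1_from_counts {𝒴 : Type*} [Fintype 𝒴] [DecidableEq 𝒴] {m : ℕ} (hm : 0 < m)
    (f : Fin m → 𝒴) (P : 𝒴 → ℝ) (hP : IsDist P) {Δ : ℝ}
    (h : ∀ S : Finset 𝒴,
      ¬ (((∑ y ∈ S, P y) + Δ/2) * m ≤ ∑ i : Fin m, (if f i ∈ S then (1:ℝ) else 0))) :
    ∑ y, |((Finset.univ.filter fun i => f i = y).card : ℝ) / m - P y| ≤ Δ := by
  have hm0 : (0:ℝ) < m := by exact_mod_cast hm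
  set e : 𝒴 → ℝ := fun y => ((Finset.univ.filter fun i => f i = y).card : ℝ) / m with he
  have hesum : ∑ y, e y = 1 := by
    rw [he, ← Finset.sum_div, count_fiber_sum f, div_self hm0.ne']
  set S : Finset 𝒴 := Finset.univ.filter fun y => P y < e y with hS
  have hgap : (∑ y ∈ S, e y) - ∑ y ∈ S, P y < Δ/2 := by
    have hnot := h S
    rw [count_subset_sum f S] at hnot
    push_neg at hnot
    have hsumcnt : ∑ y ∈ S, ((Finset.univ.filter fun i => f i = y).card : ℝ)
        = (∑ y ∈ S, e y) * m := by
      rw [he, Finset.sum_mul]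
      refine Finset.sum_congr rfl fun y _ => ?_
      field_simp
    rw [hsumcnt] at hnot
    have := lt_of_mul_lt_mul_right hnot hm0.le
    linarith
  -- split the sum
  have hsplit := Finset.sum_filter_add_sum_filter_not Finset.univ
    (fun y => P y < e y) (fun y => |e y - P y|)
  have hPsplit := Finset.sum_filter_add_sum_filter_not Finset.univ
    (fun y => P y < e y) P
  have hesplit := Finset.sum_filter_add_sum_filter_not Finset.univ
    (fun y => P y < e y) e
  have habs1 : ∑ y ∈ S, |e y - P y| = (∑ y ∈ S, e y) - ∑ y ∈ S, P y := by
    rw [← Finset.sum_sub_distrib]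
    refine Finset.sum_congr rfl fun y hy => ?_
    rw [hS, Finset.mem_filter] at hy
    exact abs_of_pos (by linarith [hy.2])
  have habs2 : ∑ y ∈ Finset.univ.filter (fun y => ¬ P y < e y), |e y - P y|
      = (∑ y ∈ Finset.univ.filter (fun y => ¬ P y < e y), P y)
        - ∑ y ∈ Finset.univ.filter (fun y => ¬ P y < e y), e y := by
    rw [← Finset.sum_sub_distrib]
    refine Finset.sum_congr rfl fun y hy => ?_
    rw [Finset.mem_filter] at hy
    have : e y ≤ P y := le_of_not_gt hy.2
    rw [abs_of_nonpos (by linarith)]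
    ring
  rw [hP.2] at hPsplit
  rw [hesum] at hesplit
  calc ∑ y, |e y - P y|
      = (∑ y ∈ S, |e y - P y|)
        + ∑ y ∈ Finset.univ.filter (fun y => ¬ P y < e y), |e y - P y| := by
        rw [← hsplit]
  _ = 2 * ((∑ y ∈ S, e y) - ∑ y ∈ S, P y) := by
        rw [habs1, habs2]
        have h1 : ∑ y ∈ Finset.univ.filter (fun y => ¬ P y < e y), P y
            = 1 - ∑ y ∈ S, P y := by rw [hS]; linarith [hPsplit]
        have h2 : ∑ y ∈ Finset.univ.filter (fun y => ¬ P y < e y), e y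
            = 1 - ∑ y ∈ S, e y := by rw [hS]; linarith [hesplit]
        rw [h1, h2]; ring
  _ ≤ Δ := by linarith

end Part6

section Part4
open Real
section chernoff
variable {𝒳 𝒴 Ω : Type*} [Fintype 𝒳] [Fintype 𝒴] [DecidableEq 𝒴] [MeasurableSpace 𝒴]
  [MeasurableSingletonClass 𝒴] [MeasurableSpace Ω]

lemma chernoff_cell (μ : Measure Ω) [IsProbabilityMeasure μ] {m : ℕ}
    (Y : 𝒳 → Fin m → Ω → 𝒴) (hmeas : ∀ x i, Measurable (Y x i))
    (hindep : iIndepFun (m := fun _ : 𝒳 × Fin m => ‹MeasurableSpace 𝒴›)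
      (fun p ω => Y p.1 p.2 ω) μ)
    (W : 𝒳 → 𝒴 → ℝ) (hW : ∀ x, IsDist (W x))
    (hlaw : ∀ x i y, μ (Y x i ⁻¹' {y}) = ENNReal.ofReal (W x y))
    (x : 𝒳) (S : Finset 𝒴) {Δ : ℝ} (hΔ : 0 < Δ) :
    μ {ω | ((∑ y ∈ S, W x y) + Δ/2) * m ≤ ∑ i : Fin m, (if Y x i ω ∈ S then (1:ℝ) else 0)}
      ≤ ENNReal.ofReal (Real.exp (-(m:ℝ) * Δ^2 / 2)) := by
  classical
  set p : ℝ := ∑ y ∈ S, W x y with hp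
  have hp0 : 0 ≤ p := Finset.sum_nonneg fun y _ => (hW x).1 y
  have hp1 : p ≤ 1 := by
    rw [hp, ← (hW x).2]
    exact Finset.sum_le_sum_of_subset_of_nonneg (Finset.subset_univ S)
      (fun y _ _ => (hW x).1 y)
  -- the indicator family over the full index
  set g : 𝒴 → ℝ := fun v => if v ∈ S then 1 else 0 with hg
  have hgmeas : Measurable g := measurable_of_countable g
  set Z : 𝒳 × Fin m → Ω → ℝ := fun q => g ∘ (fun ω => Y q.1 q.2 ω) with hZ
  have hZindep : iIndepFun Z μ :=
    hindep.comp (fun _ => g) (fun _ => hgmeas)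
  have hZmeas : ∀ q, Measurable (Z q) := fun q => hgmeas.comp (hmeas q.1 q.2)
  set s : Finset (𝒳 × Fin m) := {x} ×ˢ Finset.univ with hs
  set T : Ω → ℝ := ∑ q ∈ s, Z q with hT
  have hTmeas : Measurable T := by
    rw [hT]
    have := Finset.measurable_sum s fun q (_ : q ∈ s) => hZmeas q
    convert this using 1
    funext ω
    simp [Finset.sum_apply]
  have hTapp : ∀ ω, T ω = ∑ i : Fin m, (if Y x i ω ∈ S then (1:ℝ) else 0) := by
    intro ω
    rw [hT, Finset.sum_apply, hs, Finset.singleton_product, Finset.sum_map]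
    rfl
  have hT01 : ∀ ω, 0 ≤ T ω ∧ T ω ≤ m := by
    intro ω
    rw [hTapp ω]
    constructor
    · exact Finset.sum_nonneg fun i _ => by positivity
    · calc ∑ i : Fin m, (if Y x i ω ∈ S then (1:ℝ) else 0) ≤ ∑ _i : Fin m, (1:ℝ) :=
        Finset.sum_le_sum fun i _ => by split <;> norm_num
      _ = m := by simp
  set t : ℝ := 2 * Δ with ht
  have ht0 : 0 ≤ t := by positivity
  -- mgf of each Z q for q ∈ s
  have hmgf1 : ∀ i : Fin m, mgf (Z (x, i)) μ t = 1 - p + p * exp t := by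
    intro i
    have hB : MeasurableSet (Y x i ⁻¹' ↑S) := (hmeas x i) (Set.Finite.measurableSet (S : Set 𝒴).toFinite)
    have hμB : μ (Y x i ⁻¹' ↑S) = ENNReal.ofReal p := by
      have hdecomp : Y x i ⁻¹' ↑S = ⋃ y ∈ S, Y x i ⁻¹' {y} := by
        ext ω; simp
      rw [hdecomp, measure_biUnion_finset ?hd ?hm]
      · rw [hp, ENNReal.ofReal_sum_of_nonneg (fun y _ => (hW x).1 y)]
        exact Finset.sum_congr rfl fun y _ => hlaw x i y
      case hd =>
        intro y _ z _ hyz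
        refine Set.disjoint_left.mpr ?_
        intro ω h1 h2
        simp at h1 h2
        exact hyz (h1 ▸ h2 ▸ rfl)
      case hm => exact fun y _ => (hmeas x i) (measurableSet_singleton y)
    have hexpand : (fun ω => exp (t * Z (x, i) ω))
        = fun ω => Set.indicator (Y x i ⁻¹' ↑S) (fun _ => exp t - 1) ω + 1 := by
      funext ω
      simp only [hZ, Function.comp_apply, hg]
      by_cases hmem : Y x i ω ∈ S
      · rw [if_pos hmem, Set.indicator_of_mem (by simpa using hmem)]
        simp
      · rw [if_neg hmem, Set.indicator_of_notMem (by simpa using hmem)]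
        simp
    rw [mgf, hexpand]
    rw [integral_add ((integrable_const _).indicator hB) (integrable_const 1)]
    rw [integral_indicator_const _ hB, integral_const]
    simp [measureReal_def, hμB, ENNReal.toReal_ofReal hp0]
    ring
  -- mgf of the sum
  have hmgfT : mgf T μ t = (1 - p + p * exp t) ^ m := by
    rw [hT, hZindep.mgf_sum hZmeas s, hs, Finset.singleton_product, Finset.prod_map]
    calc ∏ i : Fin m, mgf (Z (x, i)) μ t = ∏ _i : Fin m, (1 - p + p * exp t) :=
      Finset.prod_congr rfl fun i _ => hmgf1 i
    _ = (1 - p + p * exp t) ^ m := by rw [Finset.prod_const, Finset.card_univ, Fintype.card_fin]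
  -- integrability of exp (t * T)
  have hint : Integrable (fun ω => exp (t * T ω)) μ := by
    refine Integrable.mono' (integrable_const (exp (t * m))) ?_ ?_
    · exact ((hTmeas.const_mul t).exp).aestronglyMeasurable
    · refine Filter.Eventually.of_forall fun ω => ?_
      rw [Real.norm_eq_abs, abs_of_pos (exp_pos _)]
      exact exp_le_exp.mpr (mul_le_mul_of_nonneg_left (hT01 ω).2 ht0)
  -- Chernoff
  have hcher := measure_ge_le_exp_mul_mgf (μ := μ) (X := T) (((∑ y ∈ S, W x y) + Δ/2) * m) ht0 hint
  have hbound : exp (-t * (((∑ y ∈ S, W x y) + Δ/2) * m)) * mgf T μ t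
      ≤ exp (-(m:ℝ) * Δ^2 / 2) := by
    rw [hmgfT]
    have h1 : (1 - p + p * exp t) ^ m ≤ exp (m * (p * t + t^2/8)) := by
      calc (1 - p + p * exp t) ^ m ≤ (exp (p * t + t^2/8)) ^ m := by
            apply pow_le_pow_left₀ ?_ (bernoulli_mgf_le hp0 hp1 ht0)
            nlinarith [exp_pos t, hp0, hp1]
      _ = exp (m * (p * t + t^2/8)) := by rw [← Real.exp_nat_mul]
    calc exp (-t * (((∑ y ∈ S, W x y) + Δ/2) * m)) * (1 - p + p * exp t) ^ m
        ≤ exp (-t * ((p + Δ/2) * m)) * exp (m * (p * t + t^2/8)) := by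
          rw [← hp]
          exact mul_le_mul_of_nonneg_left h1 (exp_pos _).le
    _ = exp (-t * ((p + Δ/2) * m) + m * (p * t + t^2/8)) := by rw [← Real.exp_add]
    _ = exp (-(m:ℝ) * Δ^2 / 2) := by
          congr 1
          rw [ht]
          ring
  have hfinal : (μ {ω | ((∑ y ∈ S, W x y) + Δ/2) * m ≤ T ω}).toReal
      ≤ exp (-(m:ℝ) * Δ^2 / 2) := le_trans hcher hbound
  have hev : {ω | ((∑ y ∈ S, W x y) + Δ/2) * m ≤ ∑ i : Fin m, (if Y x i ω ∈ S then (1:ℝ) else 0)}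
      = {ω | ((∑ y ∈ S, W x y) + Δ/2) * m ≤ T ω} := by
    ext ω; rw [Set.mem_setOf_eq, Set.mem_setOf_eq, hTapp ω]
  rw [hev]
  rw [← ENNReal.ofReal_toReal (measure_ne_top μ _)]
  exact ENNReal.ofReal_le_ofReal hfinal
end chernoff


section Part5
open Real
-- common log-expansion facts
section arith
variable {X Yr L n : ℝ}

lemma log_nTheta (hX : 0 < X) (hY : 0 < Yr) (hL : 0 < L) (hn : 0 < n) :
    Real.log (n * (Yr * exp 2 / (X * L)) ^ ((1:ℝ)/5))
      = Real.log n + (Real.log Yr + 2 - Real.log X - Real.log L) / 5 := by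
  have hbase : 0 < Yr * exp 2 / (X * L) := by positivity
  rw [Real.log_mul hn.ne' (by positivity), Real.log_rpow hbase]
  rw [Real.log_div (by positivity) (by positivity), Real.log_mul hY.ne' (exp_pos 2).ne',
    Real.log_mul hX.ne' hL.ne', Real.log_exp]
  ring

lemma log_u (hX : 0 < X) (hY : 0 < Yr) (hL : 0 < L) (hn : 0 < n) :
    Real.log (4 * X * Yr * L / n)
      = 2 * Real.log 2 + Real.log X + Real.log Yr + Real.log L - Real.log n := by
  rw [Real.log_div (by positivity) hn.ne', Real.log_mul (by positivity) hL.ne',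
    Real.log_mul (by positivity) hY.ne', Real.log_mul (by positivity) hX.ne',
    show (4:ℝ) = 2^2 by norm_num, Real.log_pow]
  push_cast
  ring

lemma sqrt2_ge : (1.41:ℝ) ≤ Real.sqrt 2 := by
  nlinarith [Real.sq_sqrt (show (0:ℝ) ≤ 2 by norm_num), Real.sqrt_nonneg 2]

lemma sqrt2_le : Real.sqrt 2 ≤ (1.42:ℝ) := by
  nlinarith [Real.sq_sqrt (show (0:ℝ) ≤ 2 by norm_num), Real.sqrt_nonneg 2]

/-- A1 : in the small-`u` regime the continuity bound is below ε. -/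
lemma arith_A1 (hX : 2 ≤ X) (hY : 1 ≤ Yr) (hL1 : 1 ≤ L) (hLX : Real.log (2*X) ≤ L)
    (hn0 : 0 < n) (hn : 8 * X * Yr * L ≤ n) :
    2 * Real.sqrt (4 * X * Yr * L / n / 2) * Real.log (Yr / Real.sqrt (4 * X * Yr * L / n / 2))
      + 3 * Real.sqrt (4 * X * Yr * L / n / 2)
    ≤ 5/4 * Real.sqrt (4 * X * Yr * L / n)
        * Real.log (n * (Yr * exp 2 / (X * L)) ^ ((1:ℝ)/5))
      + 4 * X * Yr * L / n := by
  have hX0 : (0:ℝ) < X := by linarith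
  have hY0 : (0:ℝ) < Yr := by linarith
  have hL0 : (0:ℝ) < L := by linarith
  set u : ℝ := 4 * X * Yr * L / n with hu
  have hu0 : 0 < u := by positivity
  set w : ℝ := Real.sqrt (u / 2) with hw
  have hw0 : 0 < w := Real.sqrt_pos.mpr (by positivity)
  have hw2 : w ^ 2 = u / 2 := Real.sq_sqrt (by positivity)
  have hsu : Real.sqrt u = Real.sqrt 2 * w := by
    rw [hw, ← Real.sqrt_mul (by norm_num : (0:ℝ) ≤ 2)]
    congr 1; field_simp
  have hlogw : Real.log w = (Real.log u - Real.log 2) / 2 := by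
    rw [hw, Real.log_sqrt (by positivity), Real.log_div hu0.ne' (by norm_num)]
  -- abbreviations
  set a : ℝ := Real.log n with ha
  set b : ℝ := Real.log X with hb
  set c : ℝ := Real.log Yr with hc
  set l : ℝ := Real.log L with hl
  have hlogu : Real.log u = 2 * Real.log 2 + b + c + l - a := log_u hX0 hY0 hL0 hn0
  have hltheta : Real.log (n * (Yr * exp 2 / (X * L)) ^ ((1:ℝ)/5))
      = a + (c + 2 - b - l) / 5 := log_nTheta hX0 hY0 hL0 hn0
  have hlogYw : Real.log (Yr / w) = c - Real.log w := Real.log_div hY0.ne' hw0.ne'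
  -- constraints in log form
  have hb2 : Real.log 2 ≤ b := Real.log_le_log (by norm_num) hX
  have hc0 : 0 ≤ c := Real.log_nonneg hY
  have hl0 : 0 ≤ l := Real.log_nonneg hL1
  have ha8 : 3 * Real.log 2 + b + c + l ≤ a := by
    have h8 : Real.log (8 * X * Yr * L) ≤ a := Real.log_le_log (by positivity) hn
    have : Real.log (8 * X * Yr * L)
        = 3 * Real.log 2 + b + c + l := by
      rw [Real.log_mul (by positivity) hL0.ne', Real.log_mul (by positivity) hY0.ne',
        Real.log_mul (by positivity) hX0.ne', show (8:ℝ) = 2^3 by norm_num, Real.log_pow]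
      push_cast; ring
    linarith
  have hlog2 : (0.6931:ℝ) ≤ Real.log 2 := by
    have := Real.log_two_gt_d9; linarith
  have hlog2' : Real.log 2 ≤ (0.6932:ℝ) := by
    have := Real.log_two_lt_d9; linarith
  -- reduce: divide by w > 0 and drop the +u term
  rw [hltheta, hlogYw, hsu]
  have key : 2 * (c - Real.log w) + 3 ≤ 5/4 * Real.sqrt 2 * (a + (c + 2 - b - l)/5) := by
    rw [hlogw, hlogu]
    -- LHS = 2c - (2 log2 + b + c + l - a - log2)/1... expand:
    -- 2c - (2log2+b+c+l-a) + log 2 + 3 ≤ (5√2/4) a + (√2/4)(c+2-b-l)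
    have hPhi : 0 ≤ 5 * a + c + 2 - b - l := by linarith
    have hk : (1.41:ℝ) ≤ Real.sqrt 2 := sqrt2_ge
    have hmul : (1.41:ℝ) * (5 * a + c + 2 - b - l) ≤ Real.sqrt 2 * (5 * a + c + 2 - b - l) :=
      mul_le_mul_of_nonneg_right hk hPhi
    nlinarith [hmul, ha8, hb2, hc0, hl0, hlog2]
  calc 2 * w * (c - Real.log w) + 3 * w = w * (2 * (c - Real.log w) + 3) := by ring
  _ ≤ w * (5/4 * Real.sqrt 2 * (a + (c + 2 - b - l)/5)) :=
      mul_le_mul_of_nonneg_left key hw0.le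
  _ = 5/4 * (Real.sqrt 2 * w) * (a + (c + 2 - b - l)/5) := by ring
  _ ≤ 5/4 * (Real.sqrt 2 * w) * (a + (c + 2 - b - l)/5) + u := by linarith

/-- A2 : in the large-`u` regime, ε exceeds log Y. -/
lemma arith_A2 (hX : 2 ≤ X) (hY : 1 ≤ Yr) (hL1 : 1 ≤ L)
    (hn0 : 0 < n) (hnY : 2 * Yr ≤ n) (hu2 : 1/2 ≤ 4 * X * Yr * L / n) :
    Real.log Yr ≤ 5/4 * Real.sqrt (4 * X * Yr * L / n)
        * Real.log (n * (Yr * exp 2 / (X * L)) ^ ((1:ℝ)/5))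
      + 4 * X * Yr * L / n := by
  have hX0 : (0:ℝ) < X := by linarith
  have hY0 : (0:ℝ) < Yr := by linarith
  have hL0 : (0:ℝ) < L := by linarith
  set u : ℝ := 4 * X * Yr * L / n with hu
  have hu0 : 0 < u := by positivity
  set v : ℝ := Real.sqrt u with hv
  have hv0 : 0 < v := Real.sqrt_pos.mpr hu0
  have hv2 : v ^ 2 = u := Real.sq_sqrt hu0.le
  have hv07 : (0.7:ℝ) ≤ v := by nlinarith
  set a : ℝ := Real.log n with ha
  set b : ℝ := Real.log X with hb
  set c : ℝ := Real.log Yr with hc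
  set l : ℝ := Real.log L with hl
  have hlogu : Real.log u = 2 * Real.log 2 + b + c + l - a := log_u hX0 hY0 hL0 hn0
  have hlogv : Real.log u = 2 * Real.log v := by
    rw [← hv2, Real.log_pow]; push_cast; ring
  have hltheta : Real.log (n * (Yr * exp 2 / (X * L)) ^ ((1:ℝ)/5))
      = a + (c + 2 - b - l) / 5 := log_nTheta hX0 hY0 hL0 hn0
  have haY : Real.log 2 + c ≤ a := by
    have h1 : Real.log (2 * Yr) ≤ a := Real.log_le_log (by positivity) hnY
    rw [Real.log_mul (by norm_num) hY0.ne'] at h1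
    exact h1
  have hc0 : 0 ≤ c := Real.log_nonneg hY
  have hlog2 : (0.6931:ℝ) ≤ Real.log 2 := by
    have := Real.log_two_gt_d9; linarith
  have hlogvb : Real.log v ≤ v - 1 := Real.log_le_sub_one_of_pos hv0
  rw [hltheta]
  -- b + l = 2 log v - 2 log 2 - c + a  (from hlogu, hlogv)
  have hbl : b + l = 2 * Real.log v - 2 * Real.log 2 - c + a := by linarith
  have hexpand : 5/4 * v * (a + (c + 2 - b - l)/5) + v ^ 2
      = v * a + v/2 * (c + 1 + Real.log 2 - Real.log v) + v ^ 2 := by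
    linear_combination (-(v/4)) * hbl
  have hfin : c ≤ v * a + v/2 * (c + 1 + Real.log 2 - Real.log v) + v ^ 2 := by
    nlinarith [mul_le_mul_of_nonneg_left haY hv0.le,
    mul_le_mul_of_nonneg_left hlogvb (by linarith : (0:ℝ) ≤ v/2),
    mul_nonneg (by linarith : (0:ℝ) ≤ c) (by linarith : (0:ℝ) ≤ v - 0.7),
      hv07, hc0, hlog2, hv0.le]
  linarith [hexpand, hv2, hfin]
end arith



section Glue
open Real

lemma empCh_isDist {𝒳 𝒴 : Type*} [Fintype 𝒴] [DecidableEq 𝒴] {m : ℕ} (hm : 0 < m)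
    (Ys : 𝒳 → Fin m → 𝒴) (x : 𝒳) : IsDist (empCh Ys x) := by
  have hm0 : (0:ℝ) < m := by exact_mod_cast hm
  constructor
  · intro y; unfold empCh; positivity
  · unfold empCh
    rw [← Finset.sum_div, count_fiber_sum (Ys x), div_self hm0.ne']

lemma abs_capR_sub_le {𝒳 𝒴 : Type*} [Fintype 𝒳] [Nonempty 𝒳] [Fintype 𝒴] [Nonempty 𝒴]
    {W V : 𝒳 → 𝒴 → ℝ} (hW : ∀ x, IsDist (W x)) (hV : ∀ x, IsDist (V x)) :
    |capR V - capR W| ≤ Real.log (Fintype.card 𝒴) := by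
  have h1 := capR_nonneg hW; have h2 := capR_nonneg hV
  have h3 := capR_le_logY hW; have h4 := capR_le_logY hV
  rw [abs_le]; constructor <;> linarith

lemma measure_ge_of_compl {Ω : Type*} [MeasurableSpace Ω] (μ : MeasureTheory.Measure Ω)
    [MeasureTheory.IsProbabilityMeasure μ] {α : ℝ} (hα0 : 0 ≤ α) (hα1 : α ≤ 1)
    {E B : Set Ω} (hB : MeasurableSet B) (hsub : Bᶜ ⊆ E)
    (hμB : μ B ≤ ENNReal.ofReal α) : ENNReal.ofReal (1 - α) ≤ μ E := by
  have h1 : ENNReal.ofReal (1 - α) + ENNReal.ofReal α ≤ 1 := by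
    rw [← ENNReal.ofReal_add (by linarith) hα0]
    rw [show 1 - α + α = 1 by ring, ENNReal.ofReal_one]
  calc ENNReal.ofReal (1 - α) ≤ 1 - ENNReal.ofReal α :=
    ENNReal.le_sub_of_add_le_right ENNReal.ofReal_ne_top h1
  _ ≤ 1 - μ B := tsub_le_tsub le_rfl hμB
  _ = μ Bᶜ := (MeasureTheory.prob_compl_eq_one_sub hB).symm
  _ ≤ μ E := MeasureTheory.measure_mono hsub

end Glue


/-- confidence bound for the capacity estimator. With
`ε = (5/4)·√N_α·log(n·θ_α)/√n + N_α/n`, the empirical capacity deviates from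
the true capacity by at most `ε` with probability at least `1 − α`. -/
theorem stmt_9 {𝒳 𝒴 : Type*} [Fintype 𝒳] [Nonempty 𝒳] [Fintype 𝒴] [Nonempty 𝒴]
    [DecidableEq 𝒴] [MeasurableSpace 𝒴] [MeasurableSingletonClass 𝒴]
    {Ω : Type*} [MeasurableSpace Ω] (μ : Measure Ω) [IsProbabilityMeasure μ]
    (h𝒳 : 2 ≤ Fintype.card 𝒳)
    (W : 𝒳 → 𝒴 → ℝ) (hW : ∀ x, IsDist (W x))
    (α : ℝ) (hα0 : 0 < α) (hα1 : α ≤ 1 / 2)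
    (m n : ℕ) (hm : 0 < m) (hnm : n = Fintype.card 𝒳 * m)
    (hn1 : Fintype.card 𝒳 ≤ n) (hn2 : 2 * Fintype.card 𝒴 ≤ n)
    (Y : 𝒳 → Fin m → Ω → 𝒴) (hmeas : ∀ x i, Measurable (Y x i))
    (hindep : iIndepFun (m := fun _ : 𝒳 × Fin m => ‹MeasurableSpace 𝒴›)
      (fun p ω => Y p.1 p.2 ω) μ)
    (hlaw : ∀ x i y, μ (Y x i ⁻¹' {y}) = ENNReal.ofReal (W x y))
    (ε : ℝ)
    (hε : ε = 5 / 4 * Real.sqrt (Nal (Fintype.card 𝒳) (Fintype.card 𝒴) α) *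
        Real.log (n * thetaAl (Fintype.card 𝒳) (Fintype.card 𝒴) α) / Real.sqrt n +
        Nal (Fintype.card 𝒳) (Fintype.card 𝒴) α / n) :
    ENNReal.ofReal (1 - α) ≤
      μ {ω | |capR (empCh fun x i => Y x i ω) - capR W| ≤ ε} := by
  classical
  have hα1' : α ≤ 1 := by linarith
  set Xr : ℝ := (Fintype.card 𝒳 : ℝ) with hXr
  set Yr : ℝ := (Fintype.card 𝒴 : ℝ) with hYr
  set L : ℝ := Real.log (Xr / α) with hLdef
  have hXr2 : (2:ℝ) ≤ Xr := by rw [hXr]; exact_mod_cast h𝒳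
  have hYr1 : (1:ℝ) ≤ Yr := by
    rw [hYr]; exact_mod_cast Fintype.card_pos
  have hnN : 2 ≤ n := le_trans h𝒳 hn1
  have hnn : (0:ℝ) < (n:ℝ) := by exact_mod_cast lt_of_lt_of_le (by norm_num) hnN
  have hlog2 : (0.6931:ℝ) ≤ Real.log 2 := by have := Real.log_two_gt_d9; linarith
  have hLlog : Real.log (2*Xr) ≤ L := by
    rw [hLdef]
    apply Real.log_le_log (by linarith)
    rw [le_div_iff₀ hα0]; nlinarith
  have hL2 : 2 * Real.log 2 ≤ L := by
    have h4 : Real.log 4 ≤ Real.log (2*Xr) := Real.log_le_log (by norm_num) (by linarith)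
    have he : Real.log 4 = 2 * Real.log 2 := by
      rw [show (4:ℝ) = 2^2 by norm_num, Real.log_pow]; push_cast; ring
    linarith
  have hL1 : (1:ℝ) ≤ L := by linarith
  have hL0 : (0:ℝ) < L := by linarith
  have hNal : Nal (Fintype.card 𝒳) (Fintype.card 𝒴) α = 4 * Xr * Yr * L := by
    rw [Nal, hXr, hYr, hLdef]
  have hθ : thetaAl (Fintype.card 𝒳) (Fintype.card 𝒴) α
      = (Yr * Real.exp 2 / (Xr * L)) ^ ((1:ℝ)/5) := by
    rw [thetaAl, hXr, hYr, hLdef]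
  set u : ℝ := 4 * Xr * Yr * L / n with hudef
  have hu0 : 0 < u := by rw [hudef]; positivity
  have hεeq : ε = 5/4 * Real.sqrt u
      * Real.log ((n:ℝ) * (Yr * Real.exp 2 / (Xr * L)) ^ ((1:ℝ)/5)) + u := by
    rw [hε, hNal, hθ, hudef, Real.sqrt_div (by positivity) (n:ℝ)]
    ring
  by_cases hucase : u ≤ 1/2
  · -- small u: concentration regime
    set Δ : ℝ := Real.sqrt (u/2) with hΔdef
    have hΔ0 : 0 < Δ := by rw [hΔdef]; exact Real.sqrt_pos.mpr (by positivity)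
    have hΔsq : Δ^2 = u/2 := by rw [hΔdef]; exact Real.sq_sqrt (by positivity)
    have hΔh : Δ ≤ 1/2 := by
      rw [hΔdef]
      calc Real.sqrt (u/2) ≤ Real.sqrt (1/4) := Real.sqrt_le_sqrt (by linarith)
      _ = 1/2 := by rw [show (1:ℝ)/4 = (1/2)^2 by norm_num, Real.sqrt_sq (by norm_num)]
    have hn8 : 8 * Xr * Yr * L ≤ (n:ℝ) := by
      rw [hudef] at hucase
      rw [div_le_iff₀ hnn] at hucase
      linarith
    have hGε : 2 * Δ * Real.log (Yr / Δ) + 3 * Δ ≤ ε := by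
      rw [hεeq, hΔdef, hudef]
      exact arith_A1 hXr2 hYr1 hL1 hLlog hnn hn8
    have hG0 : 0 ≤ 2 * Δ * Real.log (Yr / Δ) + 3 * Δ := by
      have h1 : (1:ℝ) ≤ Yr / Δ := by
        rw [le_div_iff₀ hΔ0]; linarith
      have := Real.log_nonneg h1
      nlinarith
    have hempDist : ∀ ω x, IsDist (empCh (fun x i => Y x i ω) x) :=
      fun ω x => empCh_isDist hm _ x
    by_cases hY1 : Fintype.card 𝒴 = 1
    · -- capacity identically zero
      refine measure_ge_of_compl μ hα0.le hα1' MeasurableSet.empty ?_ (by simp)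
      intro ω _
      have hzW : capR W = 0 := by
        have h1 := capR_le_logY hW
        have h2 := capR_nonneg hW
        rw [hY1] at h1; simp at h1; linarith
      have hzV : capR (empCh fun x i => Y x i ω) = 0 := by
        have h1 := capR_le_logY (hempDist ω)
        have h2 := capR_nonneg (hempDist ω)
        rw [hY1] at h1; simp at h1; linarith
      simp only [Set.mem_setOf_eq, hzW, hzV, sub_zero, abs_zero]
      linarith
    · have hY2 : 2 ≤ Fintype.card 𝒴 := by
        have := Fintype.card_pos (α := 𝒴); omega
      have hYr2 : (2:ℝ) ≤ Yr := by rw [hYr]; exact_mod_cast hY2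
      -- the bad event
      set A : 𝒳 → Finset 𝒴 → Set Ω := fun x S =>
        {ω | ((∑ y ∈ S, W x y) + Δ/2) * m
              ≤ ∑ i : Fin m, (if Y x i ω ∈ S then (1:ℝ) else 0)} with hA
      set Bad : Set Ω := ⋃ x ∈ (Finset.univ : Finset 𝒳),
        ⋃ S ∈ (Finset.univ : Finset (Finset 𝒴)), A x S with hBad
      have hAmeas : ∀ x S, MeasurableSet (A x S) := by
        intro x S
        apply measurableSet_le measurable_const
        apply Finset.measurable_sum
        intro i _
        exact Measurable.ite ((hmeas x i) (Set.Finite.measurableSet (S : Set 𝒴).toFinite))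
          measurable_const measurable_const
      have hBadmeas : MeasurableSet Bad := by
        rw [hBad]
        exact Finset.measurableSet_biUnion _ fun x _ =>
          Finset.measurableSet_biUnion _ fun S _ => hAmeas x S
      have hmreal : (m:ℝ) * Δ^2 / 2 = Yr * L := by
        have hnmr : (n:ℝ) = Xr * m := by rw [hXr]; exact_mod_cast hnm
        rw [hΔsq, hudef]
        have hXr0 : Xr ≠ 0 := by linarith
        field_simp [hnmr]
        rw [hnmr]; ring
      have hbound1 : ∀ x S, μ (A x S) ≤ ENNReal.ofReal (Real.exp (-(Yr * L))) := by
        intro x S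
        have h := chernoff_cell μ Y hmeas hindep W hW hlaw x S hΔ0
        have he : Real.exp (-(m:ℝ) * Δ^2 / 2) = Real.exp (-(Yr * L)) := by
          rw [show -(m:ℝ) * Δ^2 / 2 = -((m:ℝ) * Δ^2 / 2) by ring, hmreal]
        rw [hA]
        rw [he] at h
        exact h
      have hstep : μ Bad ≤ ((Fintype.card 𝒳 * 2^(Fintype.card 𝒴) : ℕ) : ENNReal)
          * ENNReal.ofReal (Real.exp (-(Yr * L))) := by
        calc μ Bad ≤ ∑ x ∈ Finset.univ,
              μ (⋃ S ∈ (Finset.univ : Finset (Finset 𝒴)), A x S) := by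
              rw [hBad]; exact measure_biUnion_finset_le _ _
        _ ≤ ∑ _x ∈ (Finset.univ : Finset 𝒳), ∑ _S ∈ (Finset.univ : Finset (Finset 𝒴)),
              ENNReal.ofReal (Real.exp (-(Yr * L))) := by
              refine Finset.sum_le_sum fun x _ => ?_
              refine le_trans (measure_biUnion_finset_le _ _) ?_
              exact Finset.sum_le_sum fun S _ => hbound1 x S
        _ = ((Fintype.card 𝒳 * 2^(Fintype.card 𝒴) : ℕ) : ENNReal)
              * ENNReal.ofReal (Real.exp (-(Yr * L))) := by
              rw [Finset.sum_const, Finset.sum_const, Finset.card_univ, Finset.card_univ,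
                smul_smul, Fintype.card_finset, nsmul_eq_mul]
      have hreal : ((Fintype.card 𝒳 * 2^(Fintype.card 𝒴) : ℕ) : ℝ)
          * Real.exp (-(Yr * L)) ≤ α := by
        have hexpL : Real.exp L = Xr / α := by rw [hLdef]; exact Real.exp_log (by positivity)
        have hαeq : Xr * Real.exp (-L) = α := by
          rw [Real.exp_neg, hexpL]; field_simp
        have h2Y : ((2:ℝ))^(Fintype.card 𝒴) = Real.exp (Yr * Real.log 2) := by
          rw [hYr, show ((Fintype.card 𝒴 : ℝ)) * Real.log 2
            = ((Fintype.card 𝒴 : ℕ) : ℝ) * Real.log 2 by norm_num, Real.exp_nat_mul,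
            Real.exp_log (by norm_num : (0:ℝ) < 2)]
        have hkey : (2:ℝ)^(Fintype.card 𝒴) * Real.exp (-(Yr * L)) ≤ Real.exp (-L) := by
          rw [h2Y, ← Real.exp_add]
          apply Real.exp_le_exp.mpr
          nlinarith [mul_nonneg (by linarith : (0:ℝ) ≤ Yr - 2) (by linarith : (0:ℝ) ≤ L - 2*Real.log 2)]
        push_cast
        calc (Fintype.card 𝒳 : ℝ) * 2^(Fintype.card 𝒴) * Real.exp (-(Yr * L))
            = Xr * ((2:ℝ)^(Fintype.card 𝒴) * Real.exp (-(Yr * L))) := by rw [hXr]; ring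
        _ ≤ Xr * Real.exp (-L) := by
            apply mul_le_mul_of_nonneg_left hkey (by linarith)
        _ = α := hαeq
      have hμBad : μ Bad ≤ ENNReal.ofReal α := by
        refine le_trans hstep ?_
        rw [← ENNReal.ofReal_natCast, ← ENNReal.ofReal_mul (by positivity)]
        exact ENNReal.ofReal_le_ofReal hreal
      refine measure_ge_of_compl μ hα0.le hα1' hBadmeas ?_ hμBad
      intro ω hω
      have hnotA : ∀ (x : 𝒳) (S : Finset 𝒴), ω ∉ A x S := by
        intro x S hmem
        apply hω
        rw [hBad]
        refine Set.mem_biUnion (Finset.mem_univ x) ?_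
        exact Set.mem_biUnion (Finset.mem_univ S) hmem
      have hL1x : ∀ x, ∑ y, |empCh (fun x i => Y x i ω) x y - W x y| ≤ Δ := by
        intro x
        have h := l1_from_counts hm (fun i => Y x i ω) (W x) (hW x)
          (fun S => by
            have := hnotA x S
            rw [hA] at this
            simpa [Set.mem_setOf_eq] using this)
        simpa [empCh] using h
      have hcont1 : capR (empCh fun x i => Y x i ω)
          ≤ capR W + (2 * Δ * Real.log ((Fintype.card 𝒴 : ℝ) / Δ) + 3 * Δ) :=
        cap_continuity hW (hempDist ω) hY2 hΔ0 hΔh hL1x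
      have hcont2 : capR W
          ≤ capR (empCh fun x i => Y x i ω)
            + (2 * Δ * Real.log ((Fintype.card 𝒴 : ℝ) / Δ) + 3 * Δ) := by
        refine cap_continuity (hempDist ω) hW hY2 hΔ0 hΔh ?_
        intro x
        have := hL1x x
        calc ∑ y, |W x y - empCh (fun x i => Y x i ω) x y|
            = ∑ y, |empCh (fun x i => Y x i ω) x y - W x y| := by
              refine Finset.sum_congr rfl fun y _ => abs_sub_comm _ _
        _ ≤ Δ := this
      show ω ∈ {ω | |capR (empCh fun x i => Y x i ω) - capR W| ≤ ε}
      rw [Set.mem_setOf_eq, abs_le]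
      have hYrr : (Fintype.card 𝒴 : ℝ) = Yr := by rw [hYr]
      rw [hYrr] at hcont1 hcont2
      constructor <;> linarith
  · -- large u : ε exceeds log Y
    have hu2 : 1/2 ≤ u := le_of_not_ge hucase
    have hnY : 2 * Yr ≤ (n:ℝ) := by rw [hYr]; exact_mod_cast hn2
    have hεY : Real.log Yr ≤ ε := by
      rw [hεeq, hudef]
      rw [hudef] at hu2
      exact arith_A2 hXr2 hYr1 hL1 hnn hnY hu2
    refine measure_ge_of_compl μ hα0.le hα1' MeasurableSet.empty ?_ (by simp)
    intro ω _
    have := abs_capR_sub_le hW (fun x => empCh_isDist hm (fun x i => Y x i ω) x)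
    rw [Set.mem_setOf_eq]
    calc |capR (empCh fun x i => Y x i ω) - capR W| ≤ Real.log (Fintype.card 𝒴) := this
    _ = Real.log Yr := by rw [hYr]
    _ ≤ ε := hεY
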